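/- Let P and Q be probability measures on a measurable space (Ω, 𝔉), let ε > 0, and let X, Y : Ω → [0,∞) be measurable functions, integrable under both P and Q, such that |X − Y| ≤ ε holds P-almost surely and Q-almost surely. Then |E_P[X − Y] − E_Q[X − Y]| ≤ √( 8ε·( E_P[X + Y] + E_Q[X + Y] )·D_H²(P,Q) ). -/

import Mathlib

open MeasureTheory

lemma my_cauchy_schwarz {α : Type*} [MeasurableSpace α] (ν : Measure α) (u v : α → ℝ)
    (hu : AEMeasurable u ν) (hv : AEMeasurable v ν)
    (hu0 : ∀ x, 0 ≤ u x) (hv0 : ∀ x, 0 ≤ v x)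
    (hu2 : Integrable (fun x => u x ^ 2) ν) (hv2 : Integrable (fun x => v x ^ 2) ν) :
    ∫ x, u x * v x ∂ν ≤
      Real.sqrt (∫ x, u x ^ 2 ∂ν) * Real.sqrt (∫ x, v x ^ 2 ∂ν) := by
  set A := ∫ x, u x ^ 2 ∂ν with hA
  set B := ∫ x, v x ^ 2 ∂ν with hB
  have hA0 : 0 ≤ A := integral_nonneg fun x => sq_nonneg _
  have hB0 : 0 ≤ B := integral_nonneg fun x => sq_nonneg _
  have hpq : Real.HolderConjugate 2 2 := Real.holderConjugate_iff.mpr ⟨one_lt_two, by norm_num⟩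
  have key := ENNReal.lintegral_mul_le_Lp_mul_Lq ν hpq
    (hu.ennreal_ofReal) (hv.ennreal_ofReal)
  have hLu : ∫⁻ x, (ENNReal.ofReal (u x)) ^ (2:ℝ) ∂ν = ENNReal.ofReal A := by
    rw [hA, ofReal_integral_eq_lintegral_ofReal hu2 (Filter.Eventually.of_forall fun x => sq_nonneg _)]
    congr 1 with x
    rw [← Real.rpow_natCast (u x) 2, ← ENNReal.ofReal_rpow_of_nonneg (hu0 x) (by norm_num)]
    norm_num
  have hLv : ∫⁻ x, (ENNReal.ofReal (v x)) ^ (2:ℝ) ∂ν = ENNReal.ofReal B := by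
    rw [hB, ofReal_integral_eq_lintegral_ofReal hv2 (Filter.Eventually.of_forall fun x => sq_nonneg _)]
    congr 1 with x
    rw [← Real.rpow_natCast (v x) 2, ← ENNReal.ofReal_rpow_of_nonneg (hv0 x) (by norm_num)]
    norm_num
  have key2 : ∫⁻ x, ENNReal.ofReal (u x * v x) ∂ν ≤
      ENNReal.ofReal (Real.sqrt A) * ENNReal.ofReal (Real.sqrt B) := by
    calc ∫⁻ x, ENNReal.ofReal (u x * v x) ∂ν
        = ∫⁻ x, (fun y => ENNReal.ofReal (u y) * ENNReal.ofReal (v y)) x ∂ν := by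
          congr 1 with x; exact ENNReal.ofReal_mul (hu0 x)
      _ ≤ (∫⁻ x, (ENNReal.ofReal (u x)) ^ (2:ℝ) ∂ν) ^ (1/(2:ℝ)) *
          (∫⁻ x, (ENNReal.ofReal (v x)) ^ (2:ℝ) ∂ν) ^ (1/(2:ℝ)) := key
      _ = ENNReal.ofReal (Real.sqrt A) * ENNReal.ofReal (Real.sqrt B) := by
          rw [hLu, hLv, ENNReal.ofReal_rpow_of_nonneg hA0 (by norm_num),
            ENNReal.ofReal_rpow_of_nonneg hB0 (by norm_num),
            Real.sqrt_eq_rpow, Real.sqrt_eq_rpow]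
  have hI : ∫ x, u x * v x ∂ν
      = (∫⁻ x, ENNReal.ofReal (u x * v x) ∂ν).toReal :=
    integral_eq_lintegral_of_nonneg_ae
      (Filter.Eventually.of_forall fun x => mul_nonneg (hu0 x) (hv0 x))
      (hu.mul hv).aestronglyMeasurable
  rw [hI]
  calc (∫⁻ x, ENNReal.ofReal (u x * v x) ∂ν).toReal
      ≤ (ENNReal.ofReal (Real.sqrt A) * ENNReal.ofReal (Real.sqrt B)).toReal :=
        ENNReal.toReal_mono (by finiteness) key2
    _ = Real.sqrt A * Real.sqrt B := by
        rw [ENNReal.toReal_mul, ENNReal.toReal_ofReal (Real.sqrt_nonneg _),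
          ENNReal.toReal_ofReal (Real.sqrt_nonneg _)]

/-- Squared Hellinger distance `D_H²(P,Q) = ∫ (√(dP/dν) − √(dQ/dν))² dν`
computed with the dominating measure `ν = P + Q`. -/
noncomputable def sqHellinger {α : Type*} [MeasurableSpace α] (P Q : Measure α) : ℝ :=
  ∫ x, (Real.sqrt ((P.rnDeriv (P + Q)) x).toReal
      - Real.sqrt ((Q.rnDeriv (P + Q)) x).toReal) ^ 2 ∂(P + Q)

/-- change-of-measure lemma for almost-surely-bounded differences
of nonnegative random variables. -/
theorem change_of_measure_bounded_difference {Ω : Type*} [MeasurableSpace Ω]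
    (P Q : Measure Ω) [IsProbabilityMeasure P] [IsProbabilityMeasure Q]
    (ε : ℝ) (hε : 0 < ε) (X Y : Ω → ℝ) (hX_meas : Measurable X) (hY_meas : Measurable Y)
    (hX_nonneg : ∀ ω, 0 ≤ X ω) (hY_nonneg : ∀ ω, 0 ≤ Y ω)
    (hX_int_P : Integrable X P) (hX_int_Q : Integrable X Q)
    (hY_int_P : Integrable Y P) (hY_int_Q : Integrable Y Q)
    (h_ae_P : ∀ᵐ ω ∂P, |X ω - Y ω| ≤ ε) (h_ae_Q : ∀ᵐ ω ∂Q, |X ω - Y ω| ≤ ε) :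
    |(∫ ω, (X ω - Y ω) ∂P) - ∫ ω, (X ω - Y ω) ∂Q| ≤
      Real.sqrt (8 * ε * ((∫ ω, (X ω + Y ω) ∂P) + ∫ ω, (X ω + Y ω) ∂Q) *
        sqHellinger P Q) := by
  set ν : Measure Ω := P + Q with hν
  have hPν : P ≪ ν := (Measure.le_add_right le_rfl).absolutelyContinuous
  have hQν : Q ≪ ν := (Measure.le_add_left le_rfl).absolutelyContinuous
  set f : Ω → ℝ := fun x => ((P.rnDeriv ν) x).toReal with hf_def
  set g : Ω → ℝ := fun x => ((Q.rnDeriv ν) x).toReal with hg_def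
  set a : Ω → ℝ := fun x => Real.sqrt (f x) with ha_def
  set b : Ω → ℝ := fun x => Real.sqrt (g x) with hb_def
  set Z : Ω → ℝ := fun ω => X ω - Y ω with hZ_def
  have hf_nonneg : ∀ x, 0 ≤ f x := fun x => ENNReal.toReal_nonneg
  have hg_nonneg : ∀ x, 0 ≤ g x := fun x => ENNReal.toReal_nonneg
  have ha2 : ∀ x, a x ^ 2 = f x := fun x => Real.sq_sqrt (hf_nonneg x)
  have hb2 : ∀ x, b x ^ 2 = g x := fun x => Real.sq_sqrt (hg_nonneg x)
  have ha_nonneg : ∀ x, 0 ≤ a x := fun x => Real.sqrt_nonneg _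
  have hb_nonneg : ∀ x, 0 ≤ b x := fun x => Real.sqrt_nonneg _
  have hf_meas : Measurable f := (Measure.measurable_rnDeriv _ _).ennreal_toReal
  have hg_meas : Measurable g := (Measure.measurable_rnDeriv _ _).ennreal_toReal
  have ha_meas : Measurable a := hf_meas.sqrt
  have hb_meas : Measurable b := hg_meas.sqrt
  have hf_int : Integrable f ν := Measure.integrable_toReal_rnDeriv
  have hg_int : Integrable g ν := Measure.integrable_toReal_rnDeriv
  have hZ_meas : Measurable Z := hX_meas.sub hY_meas
  have hZ_int_P : Integrable Z P := hX_int_P.sub hY_int_P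
  have hZ_int_Q : Integrable Z Q := hX_int_Q.sub hY_int_Q
  have hZabs : ∀ ω, |Z ω| ≤ X ω + Y ω := by
    intro ω
    rw [abs_le]
    constructor <;> simp only [hZ_def] <;> linarith [hX_nonneg ω, hY_nonneg ω]
  -- Z² integrable and bounded by ε(X+Y) under P and Q
  have hbound_P : ∀ᵐ ω ∂P, Z ω ^ 2 ≤ ε * (X ω + Y ω) := by
    filter_upwards [h_ae_P] with ω h
    nlinarith [sq_abs (Z ω), abs_nonneg (Z ω), hZabs ω]
  have hbound_Q : ∀ᵐ ω ∂Q, Z ω ^ 2 ≤ ε * (X ω + Y ω) := by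
    filter_upwards [h_ae_Q] with ω h
    nlinarith [sq_abs (Z ω), abs_nonneg (Z ω), hZabs ω]
  have hZ2_int_P : Integrable (fun ω => Z ω ^ 2) P := by
    refine Integrable.mono' ((hX_int_P.add hY_int_P).const_mul ε)
      ((hZ_meas.pow_const 2).aestronglyMeasurable) ?_
    filter_upwards [hbound_P] with ω h
    rwa [Real.norm_eq_abs, abs_of_nonneg (sq_nonneg _)]
  have hZ2_int_Q : Integrable (fun ω => Z ω ^ 2) Q := by
    refine Integrable.mono' ((hX_int_Q.add hY_int_Q).const_mul ε)
      ((hZ_meas.pow_const 2).aestronglyMeasurable) ?_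
    filter_upwards [hbound_Q] with ω h
    rwa [Real.norm_eq_abs, abs_of_nonneg (sq_nonneg _)]
  -- change of measure for integrals
  have hint_fZ : Integrable (fun x => f x * Z x) ν := by
    simpa [smul_eq_mul] using (integrable_rnDeriv_smul_iff hPν).mpr hZ_int_P
  have hint_gZ : Integrable (fun x => g x * Z x) ν := by
    simpa [smul_eq_mul] using (integrable_rnDeriv_smul_iff hQν).mpr hZ_int_Q
  have hint_fZ2 : Integrable (fun x => f x * Z x ^ 2) ν := by
    simpa [smul_eq_mul] using (integrable_rnDeriv_smul_iff hPν).mpr hZ2_int_P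
  have hint_gZ2 : Integrable (fun x => g x * Z x ^ 2) ν := by
    simpa [smul_eq_mul] using (integrable_rnDeriv_smul_iff hQν).mpr hZ2_int_Q
  have hP_eq : ∫ ω, Z ω ∂P = ∫ ω, f ω * Z ω ∂ν := by
    rw [← integral_rnDeriv_smul hPν (f := Z)]
    simp [smul_eq_mul]
    rfl
  have hQ_eq : ∫ ω, Z ω ∂Q = ∫ ω, g ω * Z ω ∂ν := by
    rw [← integral_rnDeriv_smul hQν (f := Z)]
    simp [smul_eq_mul]
    rfl
  have hP2_eq : ∫ ω, Z ω ^ 2 ∂P = ∫ ω, f ω * Z ω ^ 2 ∂ν := by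
    rw [← integral_rnDeriv_smul hPν (f := fun ω => Z ω ^ 2)]
    simp [smul_eq_mul]
    rfl
  have hQ2_eq : ∫ ω, Z ω ^ 2 ∂Q = ∫ ω, g ω * Z ω ^ 2 ∂ν := by
    rw [← integral_rnDeriv_smul hQν (f := fun ω => Z ω ^ 2)]
    simp [smul_eq_mul]
    rfl
  have hΔ : (∫ ω, Z ω ∂P) - ∫ ω, Z ω ∂Q = ∫ ω, (f ω - g ω) * Z ω ∂ν := by
    rw [hP_eq, hQ_eq, ← integral_sub hint_fZ hint_gZ]
    congr 1 with ω
    ring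
  -- Cauchy–Schwarz setup
  set u : Ω → ℝ := fun x => |Z x| * (a x + b x) with hu_def
  set v : Ω → ℝ := fun x => |a x - b x| with hv_def
  have hu_nonneg : ∀ x, 0 ≤ u x := fun x =>
    mul_nonneg (abs_nonneg _) (add_nonneg (ha_nonneg x) (hb_nonneg x))
  have hv_nonneg : ∀ x, 0 ≤ v x := fun x => abs_nonneg _
  have hu_meas : Measurable u := hZ_meas.abs.mul (ha_meas.add hb_meas)
  have hv_meas : Measurable v := (ha_meas.sub hb_meas).abs
  have hu2_int : Integrable (fun x => u x ^ 2) ν := by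
    refine Integrable.mono' ((hint_fZ2.add hint_gZ2).const_mul 2)
      ((hu_meas.pow_const 2).aestronglyMeasurable) ?_
    refine Filter.Eventually.of_forall fun x => ?_
    rw [Real.norm_eq_abs, abs_of_nonneg (sq_nonneg _)]
    simp only [hu_def]
    simp only [Pi.add_apply]
    rw [← ha2 x, ← hb2 x, mul_pow, sq_abs]
    nlinarith [sq_nonneg (Z x * (a x - b x))]
  have hv2_int : Integrable (fun x => v x ^ 2) ν := by
    refine Integrable.mono' ((hf_int.add hg_int).const_mul 2)
      ((hv_meas.pow_const 2).aestronglyMeasurable) ?_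
    refine Filter.Eventually.of_forall fun x => ?_
    rw [Real.norm_eq_abs, abs_of_nonneg (sq_nonneg _)]
    simp only [hv_def]
    simp only [Pi.add_apply]
    rw [← ha2 x, ← hb2 x]
    nlinarith [sq_abs (a x - b x), sq_nonneg (a x + b x)]
  -- the pointwise identity
  have hpoint : ∀ x, |(f x - g x) * Z x| = u x * v x := by
    intro x
    rw [abs_mul, ← ha2 x, ← hb2 x]
    have : a x ^ 2 - b x ^ 2 = (a x - b x) * (a x + b x) := by ring
    rw [this, abs_mul, abs_of_nonneg (add_nonneg (ha_nonneg x) (hb_nonneg x))]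
    ring
  -- definitions of A, H, S
  set A := ∫ x, u x ^ 2 ∂ν with hA_def
  set H := ∫ x, v x ^ 2 ∂ν with hH_def
  set S := (∫ ω, (X ω + Y ω) ∂P) + ∫ ω, (X ω + Y ω) ∂Q with hS_def
  have hA_nonneg : 0 ≤ A := integral_nonneg fun x => sq_nonneg _
  have hH_nonneg : 0 ≤ H := integral_nonneg fun x => sq_nonneg _
  have hS_nonneg : 0 ≤ S := add_nonneg
    (integral_nonneg fun ω => add_nonneg (hX_nonneg ω) (hY_nonneg ω))
    (integral_nonneg fun ω => add_nonneg (hX_nonneg ω) (hY_nonneg ω))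
  -- H is the squared Hellinger distance
  have hH_eq : H = sqHellinger P Q := by
    rw [hH_def, sqHellinger]
    congr 1 with x
    rw [hv_def]
    rw [sq_abs]
  -- bound on A
  have hZ2P_le : ∫ ω, Z ω ^ 2 ∂P ≤ ε * ∫ ω, (X ω + Y ω) ∂P := by
    rw [← integral_const_mul]
    exact integral_mono_ae hZ2_int_P ((hX_int_P.add hY_int_P).const_mul ε) hbound_P
  have hZ2Q_le : ∫ ω, Z ω ^ 2 ∂Q ≤ ε * ∫ ω, (X ω + Y ω) ∂Q := by
    rw [← integral_const_mul]
    exact integral_mono_ae hZ2_int_Q ((hX_int_Q.add hY_int_Q).const_mul ε) hbound_Q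
  have hA_le : A ≤ 2 * ε * S := by
    have step1 : A ≤ ∫ x, 2 * (f x * Z x ^ 2 + g x * Z x ^ 2) ∂ν := by
      refine integral_mono hu2_int ((hint_fZ2.add hint_gZ2).const_mul 2) fun x => ?_
      simp only [hu_def]
      rw [← ha2 x, ← hb2 x, mul_pow, sq_abs]
      nlinarith [sq_nonneg (Z x * (a x - b x))]
    have step2 : ∫ x, 2 * (f x * Z x ^ 2 + g x * Z x ^ 2) ∂ν
        = 2 * ((∫ ω, Z ω ^ 2 ∂P) + ∫ ω, Z ω ^ 2 ∂Q) := by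
      rw [integral_const_mul, integral_add hint_fZ2 hint_gZ2, hP2_eq, hQ2_eq]
    calc A ≤ 2 * ((∫ ω, Z ω ^ 2 ∂P) + ∫ ω, Z ω ^ 2 ∂Q) := by rw [← step2]; exact step1
      _ ≤ 2 * ε * S := by rw [hS_def]; nlinarith [hZ2P_le, hZ2Q_le]
  -- put it together
  have hmain : |(∫ ω, Z ω ∂P) - ∫ ω, Z ω ∂Q| ≤ Real.sqrt A * Real.sqrt H := by
    rw [hΔ]
    calc |∫ ω, (f ω - g ω) * Z ω ∂ν| ≤ ∫ ω, |(f ω - g ω) * Z ω| ∂ν := by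
          simpa only [Real.norm_eq_abs] using
            norm_integral_le_integral_norm (μ := ν) (f := fun ω => (f ω - g ω) * Z ω)
      _ = ∫ ω, u ω * v ω ∂ν := by
          refine integral_congr_ae (Filter.Eventually.of_forall fun x => hpoint x)
      _ ≤ Real.sqrt A * Real.sqrt H :=
          my_cauchy_schwarz ν u v hu_meas.aemeasurable hv_meas.aemeasurable
            hu_nonneg hv_nonneg hu2_int hv2_int
  have hfin : Real.sqrt A * Real.sqrt H ≤ Real.sqrt (8 * ε * S * sqHellinger P Q) := by
    rw [← Real.sqrt_mul hA_nonneg, ← hH_eq]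
    apply Real.sqrt_le_sqrt
    nlinarith [hA_le, hH_nonneg, hS_nonneg, hε.le]
  calc |(∫ ω, (X ω - Y ω) ∂P) - ∫ ω, (X ω - Y ω) ∂Q|
      = |(∫ ω, Z ω ∂P) - ∫ ω, Z ω ∂Q| := rfl
    _ ≤ Real.sqrt A * Real.sqrt H := hmain
    _ ≤ Real.sqrt (8 * ε * S * sqHellinger P Q) := hfin
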